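/- Let M be a real n×n matrix whose spectral radius satisfies ρ(M) < 1, and let (δ_t)_{t≥0} be a sequence of real n×n matrices with ‖δ_t‖ → 0 as t → ∞. Set ρ_M := (2 + ρ(M))/3, so that ρ_M < 1. Then there exists a constant C ≥ 0 such that for all natural numbers q < t, ‖(M+δ_{t−1})(M+δ_{t−2})⋯(M+δ_q)‖ ≤ C·ρ_M^{t−q}. In particular, there exists C ≥ 0 with ‖M^k‖ ≤ C·ρ_M^{k} for all k ≥ 0. -/
import Mathlib


open Matrix Filter

/-- Operator 2-norm of a real matrix. -/
noncomputable def opNorm {m n : ℕ} (M : Matrix (Fin m) (Fin n) ℝ) : ℝ :=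
  ‖(Matrix.toEuclideanLin.trans LinearMap.toContinuousLinearMap) M‖

/-- Spectral radius of a real square matrix: the maximum modulus of its complex
eigenvalues. -/
noncomputable def specRad {n : ℕ} (M : Matrix (Fin n) (Fin n) ℝ) : ℝ :=
  (spectralRadius ℂ (M.map (algebraMap ℝ ℂ))).toReal

/-- The product `f (t-1) * f (t-2) * ⋯ * f s` of matrices with indices decreasing from
left to right; it is the identity matrix when `s ≥ t`. -/
noncomputable def prodDesc {n : ℕ} (f : ℕ → Matrix (Fin n) (Fin n) ℝ) (t s : ℕ) :
    Matrix (Fin n) (Fin n) ℝ :=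
  (((List.range' s (t - s)).reverse).map f).prod

open scoped Matrix.Norms.L2Operator Topology

lemma prodDesc_self' {n : ℕ} (f : ℕ → Matrix (Fin n) (Fin n) ℝ) (q : ℕ) :
    prodDesc f q q = 1 := by
  simp [prodDesc]

lemma prodDesc_succ' {n : ℕ} (f : ℕ → Matrix (Fin n) (Fin n) ℝ) {q t : ℕ} (hq : q ≤ t) :
    prodDesc f (t + 1) q = f t * prodDesc f t q := by
  unfold prodDesc
  rw [show t + 1 - q = (t - q) + 1 from by omega, List.range'_concat,
    List.reverse_append, List.reverse_singleton, List.singleton_append,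
    List.map_cons, List.prod_cons, show q + 1 * (t - q) = t from by omega]

lemma norm_le_complex' {n : ℕ} (A : Matrix (Fin n) (Fin n) ℝ) :
    ‖A‖ ≤ ‖A.map (algebraMap ℝ ℂ)‖ := by
  rw [Matrix.l2_opNorm_def]
  refine ContinuousLinearMap.opNorm_le_bound _ (norm_nonneg _) fun x => ?_
  set xc : EuclideanSpace ℂ (Fin n) :=
    (WithLp.equiv 2 (Fin n → ℂ)).symm (fun i => ((x i : ℝ) : ℂ)) with hxc
  have hx : ‖xc‖ = ‖x‖ := by
    simp [hxc, EuclideanSpace.norm_eq]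
  have h1 : ‖(Matrix.toEuclideanLin.trans LinearMap.toContinuousLinearMap) A x‖
      = ‖(EuclideanSpace.equiv (Fin n) ℂ).symm
          ((A.map (algebraMap ℝ ℂ)) *ᵥ (WithLp.equiv 2 _ xc))‖ := by
    simp only [LinearEquiv.trans_apply, LinearMap.coe_toContinuousLinearMap',
      Matrix.toEuclideanLin_apply]
    rw [EuclideanSpace.norm_eq, EuclideanSpace.norm_eq]
    congr 1
    refine Finset.sum_congr rfl fun i _ => ?_
    have : (A.map (algebraMap ℝ ℂ)) *ᵥ (WithLp.equiv 2 (Fin n → ℂ) xc)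
        = fun i => ((A *ᵥ (WithLp.equiv 2 (Fin n → ℝ) x)) i : ℂ) := by
      funext i
      simp [hxc, Matrix.mulVec, dotProduct]
    rw [this]
    simp
  rw [h1]
  calc _ ≤ ‖A.map (algebraMap ℝ ℂ)‖ * ‖xc‖ := Matrix.l2_opNorm_mulVec _ _
    _ = _ := by rw [hx]

lemma exists_pow_norm_le' {n : ℕ} (A : Matrix (Fin n) (Fin n) ℂ) {r : ℝ}
    (hr : 0 < r) (h : (spectralRadius ℂ A).toReal < r) :
    ∃ C : ℝ, 1 ≤ C ∧ ∀ k : ℕ, ‖A ^ k‖ ≤ C * r ^ k := by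
  rcases Nat.eq_zero_or_pos n with hn | hn
  · refine ⟨1, le_refl 1, fun k => ?_⟩
    subst hn
    have : A ^ k = 0 := Subsingleton.elim _ _
    rw [this, norm_zero, one_mul]
    positivity
  · haveI : Nonempty (Fin n) := Fin.pos_iff_nonempty.mp hn
    haveI : NormOneClass (Matrix (Fin n) (Fin n) ℂ) :=
      ⟨by rw [Matrix.cstar_norm_def, _root_.map_one]; exact ContinuousLinearMap.norm_id⟩
    have htop : spectralRadius ℂ A ≠ ⊤ :=
      ((spectrum.spectralRadius_le_nnnorm A).trans_lt ENNReal.coe_lt_top).ne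
    have hlt : spectralRadius ℂ A < ENNReal.ofReal r :=
      (ENNReal.lt_ofReal_iff_toReal_lt htop).mpr h
    have hG := spectrum.pow_nnnorm_pow_one_div_tendsto_nhds_spectralRadius A
    have hev : ∀ᶠ k : ℕ in atTop,
        ((‖A ^ k‖₊ : ENNReal) ^ (1 / (k : ℝ))) < ENNReal.ofReal r :=
      hG.eventually_lt_const hlt
    obtain ⟨K, hK⟩ := (hev.and (eventually_ge_atTop 1)).exists_forall_of_atTop
    have hbig : ∀ k, K ≤ k → ‖A ^ k‖ ≤ r ^ k := by
      intro k hk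
      obtain ⟨hklt, hk1⟩ := hK k hk
      have hkne : (k : ℝ) ≠ 0 := by positivity
      have h2 : ((‖A ^ k‖₊ : ENNReal)) < (ENNReal.ofReal r) ^ (k : ℝ) := by
        have h3 := ENNReal.rpow_lt_rpow hklt (by positivity : (0:ℝ) < (k : ℝ))
        rwa [← ENNReal.rpow_mul, one_div, inv_mul_cancel₀ hkne, ENNReal.rpow_one] at h3
      have h4 : ((‖A ^ k‖₊ : ENNReal)) < ENNReal.ofReal (r ^ k) := by
        rwa [ENNReal.ofReal_rpow_of_pos hr, Real.rpow_natCast] at h2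
      have h5 := (ENNReal.lt_ofReal_iff_toReal_lt ENNReal.coe_ne_top).mp h4
      simpa using h5.le
    refine ⟨1 + ∑ j ∈ Finset.range K, ‖A ^ j‖ / r ^ j, ?_, fun k => ?_⟩
    · have : (0:ℝ) ≤ ∑ j ∈ Finset.range K, ‖A ^ j‖ / r ^ j :=
        Finset.sum_nonneg fun j _ => by positivity
      linarith
    · rcases lt_or_ge k K with hk | hk
      · have h1 : ‖A ^ k‖ / r ^ k ≤ ∑ j ∈ Finset.range K, ‖A ^ j‖ / r ^ j :=
          Finset.single_le_sum (f := fun j => ‖A ^ j‖ / r ^ j)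
            (fun j _ => by positivity) (Finset.mem_range.mpr hk)
        have h2 : ‖A ^ k‖ / r ^ k ≤ 1 + ∑ j ∈ Finset.range K, ‖A ^ j‖ / r ^ j := by linarith
        calc ‖A ^ k‖ = (‖A ^ k‖ / r ^ k) * r ^ k := by field_simp
          _ ≤ _ := mul_le_mul_of_nonneg_right h2 (by positivity)
      · have h1 : ‖A ^ k‖ ≤ r ^ k := hbig k hk
        have h2 : (0:ℝ) ≤ ∑ j ∈ Finset.range K, ‖A ^ j‖ / r ^ j :=
          Finset.sum_nonneg fun j _ => by positivity
        nlinarith [pow_pos hr k]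

theorem perturbed_product_exponential_decay
    {n : ℕ} (M : Matrix (Fin n) (Fin n) ℝ)
    (hM : specRad M < 1)
    (δ : ℕ → Matrix (Fin n) (Fin n) ℝ)
    (hδ : Tendsto (fun t => opNorm (δ t)) atTop (nhds 0)) :
    (∃ C : ℝ, 0 ≤ C ∧ ∀ q t : ℕ, q < t →
        opNorm (prodDesc (fun k => M + δ k) t q)
          ≤ C * ((2 + specRad M) / 3) ^ (t - q))
    ∧ (∃ C : ℝ, 0 ≤ C ∧ ∀ k : ℕ,
        opNorm (M ^ k) ≤ C * ((2 + specRad M) / 3) ^ k) := by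
  have hr0 : 0 ≤ specRad M := ENNReal.toReal_nonneg
  set r := specRad M with hrdef
  set ρ : ℝ := (2 + r) / 3 with hρdef
  set ρ₁ : ℝ := (1 + 2 * r) / 3 with hρ₁def
  have hρ₁pos : 0 < ρ₁ := by rw [hρ₁def]; linarith
  have hρ₁ρ : ρ₁ < ρ := by rw [hρ₁def, hρdef]; linarith
  have hρpos : 0 < ρ := lt_trans hρ₁pos hρ₁ρ
  have hrρ₁ : r < ρ₁ := by rw [hρ₁def]; linarith
  obtain ⟨C, hC1, hC⟩ := exists_pow_norm_le' (M.map (algebraMap ℝ ℂ)) hρ₁pos hrρ₁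
  have hC0 : (0:ℝ) ≤ C := zero_le_one.trans hC1
  have hCpos : (0:ℝ) < C := lt_of_lt_of_le zero_lt_one hC1
  -- power bound for the real matrix
  have hpow : ∀ k : ℕ, ‖M ^ k‖ ≤ C * ρ₁ ^ k := by
    intro k
    refine (norm_le_complex' (M ^ k)).trans ?_
    have : (M ^ k).map (algebraMap ℝ ℂ) = (M.map (algebraMap ℝ ℂ)) ^ k :=
      map_pow ((algebraMap ℝ ℂ).mapMatrix) M k
    rw [this]
    exact hC k
  have hρ₁ρle : ∀ k : ℕ, ρ₁ ^ k ≤ ρ ^ k := fun k => pow_le_pow_left₀ hρ₁pos.le hρ₁ρ.le k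
  have hpow' : ∀ k : ℕ, opNorm (M ^ k) ≤ C * ρ ^ k := by
    intro k
    calc opNorm (M ^ k) = ‖M ^ k‖ := (Matrix.l2_opNorm_def _).symm
      _ ≤ C * ρ₁ ^ k := hpow k
      _ ≤ C * ρ ^ k := mul_le_mul_of_nonneg_left (hρ₁ρle k) hC0
  -- the weighted norm
  set N : Matrix (Fin n) (Fin n) ℝ → ℝ :=
    fun X => ⨆ k : ℕ, ‖M ^ k * X‖ / ρ₁ ^ k with hNdef
  have hterm : ∀ X (k : ℕ), ‖M ^ k * X‖ / ρ₁ ^ k ≤ C * ‖X‖ := by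
    intro X k
    rw [div_le_iff₀ (pow_pos hρ₁pos k)]
    calc ‖M ^ k * X‖ ≤ ‖M ^ k‖ * ‖X‖ := norm_mul_le _ _
      _ ≤ (C * ρ₁ ^ k) * ‖X‖ := mul_le_mul_of_nonneg_right (hpow k) (norm_nonneg X)
      _ = C * ‖X‖ * ρ₁ ^ k := by ring
  have hbdd : ∀ X, BddAbove (Set.range fun k : ℕ => ‖M ^ k * X‖ / ρ₁ ^ k) := by
    intro X
    exact ⟨C * ‖X‖, by rintro _ ⟨k, rfl⟩; exact hterm X k⟩
  have hNle : ∀ X, N X ≤ C * ‖X‖ := fun X => ciSup_le (hterm X)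
  have hleN : ∀ X, ‖X‖ ≤ N X := by
    intro X
    have := le_ciSup (hbdd X) 0
    simpa using this
  have hN0 : ∀ X, 0 ≤ N X := fun X => (norm_nonneg X).trans (hleN X)
  have hterm_le : ∀ X (k : ℕ), ‖M ^ k * X‖ / ρ₁ ^ k ≤ N X := fun X k => le_ciSup (hbdd X) k
  -- key contraction estimate
  have hkey : ∀ (s : ℕ) X, N ((M + δ s) * X) ≤ (ρ₁ + C * ‖δ s‖) * N X := by
    intro s X
    refine ciSup_le fun k => ?_
    rw [div_le_iff₀ (pow_pos hρ₁pos k)]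
    have e1 : M ^ k * ((M + δ s) * X) = M ^ (k + 1) * X + M ^ k * (δ s * X) := by
      rw [add_mul, mul_add, pow_succ, mul_assoc]
    have h1 : ‖M ^ (k + 1) * X‖ ≤ N X * ρ₁ ^ (k + 1) := by
      have := hterm_le X (k + 1)
      rwa [div_le_iff₀ (pow_pos hρ₁pos _)] at this
    have h2 : ‖M ^ k * (δ s * X)‖ ≤ (C * ρ₁ ^ k) * (‖δ s‖ * ‖X‖) :=
      calc ‖M ^ k * (δ s * X)‖ ≤ ‖M ^ k‖ * ‖δ s * X‖ := norm_mul_le _ _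
        _ ≤ (C * ρ₁ ^ k) * (‖δ s‖ * ‖X‖) :=
          mul_le_mul (hpow k) (norm_mul_le _ _) (norm_nonneg _)
            (by positivity)
    have h3 : C * ρ₁ ^ k * (‖δ s‖ * ‖X‖) ≤ C * ‖δ s‖ * N X * ρ₁ ^ k := by
      have hnn : (0:ℝ) ≤ C * ρ₁ ^ k * ‖δ s‖ :=
        mul_nonneg (mul_nonneg hC0 (pow_nonneg hρ₁pos.le k)) (norm_nonneg _)
      calc C * ρ₁ ^ k * (‖δ s‖ * ‖X‖) = (C * ρ₁ ^ k * ‖δ s‖) * ‖X‖ := by ring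
        _ ≤ (C * ρ₁ ^ k * ‖δ s‖) * N X := mul_le_mul_of_nonneg_left (hleN X) hnn
        _ = C * ‖δ s‖ * N X * ρ₁ ^ k := by ring
    calc ‖M ^ k * ((M + δ s) * X)‖
        = ‖M ^ (k + 1) * X + M ^ k * (δ s * X)‖ := by rw [e1]
      _ ≤ ‖M ^ (k + 1) * X‖ + ‖M ^ k * (δ s * X)‖ := norm_add_le _ _
      _ ≤ N X * ρ₁ ^ (k + 1) + C * ‖δ s‖ * N X * ρ₁ ^ k := add_le_add h1 (h2.trans h3)
      _ = (ρ₁ + C * ‖δ s‖) * N X * ρ₁ ^ k := by rw [pow_succ]; ring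
  -- crude estimate
  have hcrude : ∀ (s : ℕ) X, N ((M + δ s) * X) ≤ (C * ‖M + δ s‖) * N X := by
    intro s X
    calc N ((M + δ s) * X) ≤ C * ‖(M + δ s) * X‖ := hNle _
      _ ≤ C * (‖M + δ s‖ * ‖X‖) := mul_le_mul_of_nonneg_left (norm_mul_le _ _) hC0
      _ = (C * ‖M + δ s‖) * ‖X‖ := by ring
      _ ≤ (C * ‖M + δ s‖) * N X :=
        mul_le_mul_of_nonneg_left (hleN X) (mul_nonneg hC0 (norm_nonneg _))
  -- threshold T
  have hδ' : Tendsto (fun t => ‖δ t‖) atTop (nhds 0) := hδ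
  have hε : (0:ℝ) < (ρ - ρ₁) / C := div_pos (by linarith) hCpos
  obtain ⟨T, hT⟩ := (hδ'.eventually_lt_const hε).exists_forall_of_atTop
  have hsmall : ∀ s, T ≤ s → ρ₁ + C * ‖δ s‖ ≤ ρ := by
    intro s hs
    have h1 := hT s hs
    have h2 : C * ‖δ s‖ < ρ - ρ₁ := by
      have := (lt_div_iff₀' hCpos).mp h1
      linarith
    linarith
  -- the constant B
  set B : ℝ := ρ + ∑ s ∈ Finset.range T, C * ‖M + δ s‖ with hBdef
  have hsum0 : (0:ℝ) ≤ ∑ s ∈ Finset.range T, C * ‖M + δ s‖ :=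
    Finset.sum_nonneg fun s _ => mul_nonneg hC0 (norm_nonneg _)
  have hBρ : ρ ≤ B := by rw [hBdef]; linarith
  have hBpos : 0 < B := lt_of_lt_of_le hρpos hBρ
  have hBs : ∀ s, s < T → C * ‖M + δ s‖ ≤ B := by
    intro s hs
    have h1 : C * ‖M + δ s‖ ≤ ∑ j ∈ Finset.range T, C * ‖M + δ j‖ :=
      Finset.single_le_sum (f := fun j => C * ‖M + δ j‖)
        (fun j _ => mul_nonneg hC0 (norm_nonneg _)) (Finset.mem_range.mpr hs)
    rw [hBdef]; linarith
  have hBdivρ : 1 ≤ B / ρ := (one_le_div hρpos).mpr hBρ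
  have hBdivρ0 : 0 ≤ B / ρ := zero_le_one.trans hBdivρ
  have hBρρ : ρ * (B / ρ) = B := by field_simp
  have epow : ∀ m : ℕ, ρ ^ m * (B / ρ) ^ m = B ^ m := fun m => by rw [← mul_pow, hBρρ]
  -- main induction
  have main : ∀ q t : ℕ, q ≤ t →
      N (prodDesc (fun k => M + δ k) t q)
        ≤ ρ ^ (t - q) * (B / ρ) ^ (min T (t - q)) * N 1 := by
    intro q t hq
    induction t, hq using Nat.le_induction with
    | base =>
      rw [prodDesc_self']
      simp
    | succ t hq ih =>
      rw [prodDesc_succ' _ hq]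
      have hsub : t + 1 - q = (t - q) + 1 := by omega
      rcases le_or_gt T t with hTt | hTt
      · have h4 : (B / ρ) ^ (min T (t - q)) ≤ (B / ρ) ^ (min T (t + 1 - q)) :=
          pow_le_pow_right₀ hBdivρ (by omega)
        calc N ((M + δ t) * prodDesc (fun k => M + δ k) t q)
            ≤ (ρ₁ + C * ‖δ t‖) * N (prodDesc (fun k => M + δ k) t q) := hkey t _
          _ ≤ ρ * N (prodDesc (fun k => M + δ k) t q) :=
            mul_le_mul_of_nonneg_right (hsmall t hTt) (hN0 _)
          _ ≤ ρ * (ρ ^ (t - q) * (B / ρ) ^ (min T (t - q)) * N 1) :=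
            mul_le_mul_of_nonneg_left ih hρpos.le
          _ = ρ ^ ((t - q) + 1) * (B / ρ) ^ (min T (t - q)) * N 1 := by
            rw [pow_succ]; ring
          _ ≤ ρ ^ ((t - q) + 1) * (B / ρ) ^ (min T (t + 1 - q)) * N 1 :=
            mul_le_mul_of_nonneg_right
              (mul_le_mul_of_nonneg_left h4 (pow_nonneg hρpos.le _)) (hN0 1)
          _ = ρ ^ (t + 1 - q) * (B / ρ) ^ (min T (t + 1 - q)) * N 1 := by rw [hsub]
      · have hmin1 : min T (t - q) = t - q := min_eq_right (by omega)
        have hmin2 : min T (t + 1 - q) = t + 1 - q := min_eq_right (by omega)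
        rw [hmin1] at ih
        calc N ((M + δ t) * prodDesc (fun k => M + δ k) t q)
            ≤ (C * ‖M + δ t‖) * N (prodDesc (fun k => M + δ k) t q) := hcrude t _
          _ ≤ B * N (prodDesc (fun k => M + δ k) t q) :=
            mul_le_mul_of_nonneg_right (hBs t hTt) (hN0 _)
          _ ≤ B * (ρ ^ (t - q) * (B / ρ) ^ (t - q) * N 1) :=
            mul_le_mul_of_nonneg_left ih hBpos.le
          _ = B ^ ((t - q) + 1) * N 1 := by rw [epow (t - q), pow_succ]; ring
          _ = ρ ^ (t + 1 - q) * (B / ρ) ^ (min T (t + 1 - q)) * N 1 := by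
            rw [hmin2, hsub, epow]
  constructor
  · refine ⟨(B / ρ) ^ T * N 1, mul_nonneg (pow_nonneg hBdivρ0 _) (hN0 1), fun q t hqt => ?_⟩
    have h1 := main q t hqt.le
    have h3 : (B / ρ) ^ (min T (t - q)) ≤ (B / ρ) ^ T :=
      pow_le_pow_right₀ hBdivρ (min_le_left _ _)
    calc opNorm (prodDesc (fun k => M + δ k) t q)
        = ‖prodDesc (fun k => M + δ k) t q‖ := (Matrix.l2_opNorm_def _).symm
      _ ≤ N (prodDesc (fun k => M + δ k) t q) := hleN _
      _ ≤ ρ ^ (t - q) * (B / ρ) ^ (min T (t - q)) * N 1 := h1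
      _ ≤ ρ ^ (t - q) * (B / ρ) ^ T * N 1 :=
        mul_le_mul_of_nonneg_right
          (mul_le_mul_of_nonneg_left h3 (pow_nonneg hρpos.le _)) (hN0 1)
      _ = (B / ρ) ^ T * N 1 * ρ ^ (t - q) := by ring
  · exact ⟨C, hC0, hpow'⟩
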